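/- Let n ≥ 5 be an odd integer and let m ≥ r ≥ 1 be integers with m even. Then (n+1)r ≤ nm holds if and only if for every integer t with 2m ≤ t ≤ nm/2 one has max(0, ⌈(mn - 2t)/(n-4)⌉) ≥ max(0, ⌈(r(n+1) - 2t)/(n-3)⌉). -/

import Mathlib

/-- The numerical heart of Theorem 3.4(b) in the case `m` even: for `n ≥ 5` odd and
integers `m ≥ r ≥ 1` with `m` even, `(n+1)r ≤ nm` holds iff for every integer `t` with
`2m ≤ t ≤ nm/2` one has
`max(0, ⌈(mn - 2t)/(n-4)⌉) ≥ max(0, ⌈(r(n+1) - 2t)/(n-3)⌉)`. -/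
theorem stmt3 (n m r : ℤ) (hn : 5 ≤ n) (hodd : Odd n) (hr : 1 ≤ r) (hmr : r ≤ m)
    (hm : Even m) :
    (n + 1) * r ≤ n * m ↔
      ∀ t : ℤ, 2 * m ≤ t → 2 * t ≤ n * m →
        max 0 ⌈((r * (n + 1) - 2 * t : ℤ) : ℚ) / ((n - 3 : ℤ) : ℚ)⌉ ≤
          max 0 ⌈((m * n - 2 * t : ℤ) : ℚ) / ((n - 4 : ℤ) : ℚ)⌉ := by
  have hnq : (5:ℚ) ≤ (n:ℚ) := by exact_mod_cast hn
  have hn3 : (0:ℚ) < (n:ℚ) - 3 := by linarith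
  have hn4 : (0:ℚ) < (n:ℚ) - 4 := by linarith
  constructor
  · intro h t _ _
    apply max_le (le_max_left _ _)
    rcases le_or_gt 0 (m * n - 2 * t) with hB | hB
    · refine le_trans (Int.ceil_le_ceil ?_) (le_max_right _ _)
      have hA : ((r * (n + 1) - 2 * t : ℤ) : ℚ) ≤ ((m * n - 2 * t : ℤ) : ℚ) := by
        have hq : ((n:ℚ) + 1) * r ≤ (n:ℚ) * m := by exact_mod_cast h
        push_cast; nlinarith
      have hBq : (0:ℚ) ≤ ((m * n - 2 * t : ℤ) : ℚ) := by exact_mod_cast hB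
      calc ((r * (n + 1) - 2 * t : ℤ) : ℚ) / ((n - 3 : ℤ) : ℚ)
          ≤ ((m * n - 2 * t : ℤ) : ℚ) / ((n - 3 : ℤ) : ℚ) := by
            apply div_le_div_of_nonneg_right hA
            push_cast; linarith
        _ ≤ ((m * n - 2 * t : ℤ) : ℚ) / ((n - 4 : ℤ) : ℚ) := by
            apply div_le_div_of_nonneg_left hBq
            · push_cast; linarith
            · push_cast; linarith
    · refine le_trans ?_ (le_max_left _ _)
      rw [Int.ceil_le]
      push_cast
      apply div_nonpos_of_nonpos_of_nonneg
      · push_cast at hB ⊢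
        nlinarith
      · linarith
  · intro h
    by_contra hlt
    push_neg at hlt
    obtain ⟨k, hk⟩ := hm.mul_left n
    have h1 : 2 * m ≤ k := by nlinarith
    have h2 : 2 * k ≤ n * m := by omega
    have := h k h1 h2
    have hB0 : (m * n - 2 * k : ℤ) = 0 := by rw [mul_comm]; omega
    have hA1 : (1:ℤ) ≤ r * (n + 1) - 2 * k := by nlinarith
    rw [hB0] at this
    simp only [Int.cast_zero, zero_div, Int.ceil_zero, max_self] at this
    have hpos : (0:ℚ) < ((r * (n + 1) - 2 * k : ℤ) : ℚ) / ((n - 3 : ℤ) : ℚ) := by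
      apply div_pos
      · exact_mod_cast hA1.trans_lt' zero_lt_one
      · push_cast; linarith
    have := le_trans (le_max_right (0:ℤ) _) this
    rw [Int.ceil_le] at this
    push_cast at this hpos
    linarith
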